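/- Weyl's perturbation theorem: let A, B be real symmetric n×n matrices with eigenvalues α_1 ≥ ... ≥ α_n and β_1 ≥ ... ≥ β_n respectively. Then for all i, |α_i − β_i| ≤ ‖A − B‖, where ‖·‖ is the operator 2-norm. -/

import Mathlib

open Matrix BigOperators

/-- Operator 2-norm of a real square matrix. -/
noncomputable def opNorm {n : ℕ} (M : Matrix (Fin n) (Fin n) ℝ) : ℝ :=
  ‖Matrix.toEuclideanCLM (𝕜 := ℝ) M‖

/-- Spectral radius of a real square matrix. -/
noncomputable def specRad {n : ℕ} (M : Matrix (Fin n) (Fin n) ℝ) : ℝ :=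
  sSup {r : ℝ | ∃ μ ∈ spectrum ℝ M, r = |μ|}

/-- Off-diagonal (adjacency) part of a matrix. -/
def adjPart {n : ℕ} (M : Matrix (Fin n) (Fin n) ℝ) : Matrix (Fin n) (Fin n) ℝ :=
  Matrix.of fun i j => if i = j then 0 else M i j

/-- Laplacian built from the off-diagonal part of `M`. -/
def lap {n : ℕ} (M : Matrix (Fin n) (Fin n) ℝ) : Matrix (Fin n) (Fin n) ℝ :=
  Matrix.diagonal (fun i => ∑ j, adjPart M i j) - adjPart M

/-- Maximum absolute row sum (∞-norm). -/
noncomputable def rowSumNorm {n : ℕ} (M : Matrix (Fin n) (Fin n) ℝ) : ℝ :=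
  ⨆ i, ∑ j, |M i j|

/-- Maximum absolute column sum (1-norm). -/
noncomputable def colSumNorm {n : ℕ} (M : Matrix (Fin n) (Fin n) ℝ) : ℝ :=
  ⨆ j, ∑ i, |M i j|

/-- `α` lists the eigenvalues of a Hermitian matrix in decreasing order. -/
def IsEigList {n : ℕ} {M : Matrix (Fin n) (Fin n) ℝ} (hM : M.IsHermitian)
    (α : Fin n → ℝ) : Prop :=
  Antitone α ∧ ∃ σ : Equiv.Perm (Fin n), α = hM.eigenvalues ∘ σ

/-- Loewner order: `B - A` is positive semidefinite. -/
def PSDle {n : ℕ} (A B : Matrix (Fin n) (Fin n) ℝ) : Prop := (B - A).PosSemidef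

section WeylAux
open scoped RealInnerProductSpace
variable {n : ℕ}


lemma clm_apply_eigenvectorBasis {A : Matrix (Fin n) (Fin n) ℝ} (hA : A.IsHermitian) (k : Fin n) :
    Matrix.toEuclideanCLM (𝕜 := ℝ) A (hA.eigenvectorBasis k)
      = hA.eigenvalues k • hA.eigenvectorBasis k := by
  apply (WithLp.equiv 2 (Fin n → ℝ)).injective
  simp only [WithLp.equiv_apply, Matrix.ofLp_toEuclideanCLM, Matrix.toLin'_apply]
  have := hA.mulVec_eigenvectorBasis k
  ext j
  simpa using congrFun this j

lemma inner_zero_of_mem_span {b : OrthonormalBasis (Fin n) ℝ (EuclideanSpace ℝ (Fin n))}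
    {S : Set (Fin n)} {x : EuclideanSpace ℝ (Fin n)}
    (hx : x ∈ Submodule.span ℝ (b '' S)) {k : Fin n} (hk : k ∉ S) :
    ⟪b k, x⟫ = 0 := by
  have hle : Submodule.span ℝ (b '' S) ≤ (ℝ ∙ (b k))ᗮ := by
    rw [Submodule.span_le]
    rintro y ⟨j, hj, rfl⟩
    rw [SetLike.mem_coe, Submodule.mem_orthogonal_singleton_iff_inner_right]
    exact b.orthonormal.2 (fun h => hk (h ▸ hj))
  exact (Submodule.mem_orthogonal_singleton_iff_inner_right).mp (hle hx)

lemma quad_lower {T : EuclideanSpace ℝ (Fin n) →L[ℝ] EuclideanSpace ℝ (Fin n)}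
    {b : OrthonormalBasis (Fin n) ℝ (EuclideanSpace ℝ (Fin n))} {lam : Fin n → ℝ}
    (hT : ∀ k, T (b k) = lam k • b k) {S : Set (Fin n)} {c : ℝ}
    (hc : ∀ k ∈ S, c ≤ lam k) {x : EuclideanSpace ℝ (Fin n)}
    (hx : x ∈ Submodule.span ℝ (b '' S)) :
    c * ‖x‖ ^ 2 ≤ ⟪x, T x⟫ := by
  have hTx : T x = ∑ k, (lam k * ⟪b k, x⟫) • b k := by
    conv_lhs => rw [← b.sum_repr' x]
    rw [map_sum]
    refine Finset.sum_congr rfl fun k _ => ?_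
    rw [_root_.map_smul, hT k, smul_smul, mul_comm]
  have hrep : ⟪x, T x⟫ = ∑ k, lam k * ⟪b k, x⟫ ^ 2 := by
    rw [hTx, inner_sum]
    refine Finset.sum_congr rfl fun k _ => ?_
    rw [inner_smul_right, real_inner_comm]
    ring
  have hnorm : ‖x‖ ^ 2 = ∑ k, ⟪b k, x⟫ ^ 2 := by
    rw [← real_inner_self_eq_norm_sq, ← b.sum_inner_mul_inner x x]
    refine Finset.sum_congr rfl fun k _ => ?_
    rw [real_inner_comm x (b k)]; ring
  rw [hrep, hnorm, Finset.mul_sum]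
  refine Finset.sum_le_sum fun k _ => ?_
  by_cases hk : k ∈ S
  · exact mul_le_mul_of_nonneg_right (hc k hk) (sq_nonneg _)
  · rw [inner_zero_of_mem_span hx hk]; simp

lemma quad_upper {T : EuclideanSpace ℝ (Fin n) →L[ℝ] EuclideanSpace ℝ (Fin n)}
    {b : OrthonormalBasis (Fin n) ℝ (EuclideanSpace ℝ (Fin n))} {lam : Fin n → ℝ}
    (hT : ∀ k, T (b k) = lam k • b k) {S : Set (Fin n)} {c : ℝ}
    (hc : ∀ k ∈ S, lam k ≤ c) {x : EuclideanSpace ℝ (Fin n)}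
    (hx : x ∈ Submodule.span ℝ (b '' S)) :
    ⟪x, T x⟫ ≤ c * ‖x‖ ^ 2 := by
  have h := quad_lower (T := -T) (lam := fun k => -lam k)
    (fun k => by rw [ContinuousLinearMap.neg_apply, hT k, neg_smul])
    (c := -c) (fun k hk => neg_le_neg (hc k hk)) hx
  rw [ContinuousLinearMap.neg_apply, inner_neg_right] at h
  linarith

lemma finrank_span_eigen (b : OrthonormalBasis (Fin n) ℝ (EuclideanSpace ℝ (Fin n)))
    (σ : Equiv.Perm (Fin n)) (S : Set (Fin n)) [Fintype S] :
    Module.finrank ℝ (Submodule.span ℝ (⇑b '' (σ '' S))) = Fintype.card S := by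
  have hli : LinearIndependent ℝ (fun j : S => b (σ j)) :=
    b.orthonormal.linearIndependent.comp _ (σ.injective.comp Subtype.val_injective)
  have hrange : Set.range (fun j : S => b (σ j)) = ⇑b '' (σ '' S) := by
    rw [show (fun j : S => b (σ j)) = (⇑b ∘ ⇑σ) ∘ Subtype.val from rfl, Set.range_comp,
      Subtype.range_coe, Set.image_comp]
  rw [← hrange, finrank_span_eq_card hli]

lemma weyl_one_side {A B : Matrix (Fin n) (Fin n) ℝ} (hA : A.IsHermitian) (hB : B.IsHermitian)
    {α β : Fin n → ℝ} (hα : IsEigList hA α) (hβ : IsEigList hB β) (i : Fin n) :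
    α i - β i ≤ ‖Matrix.toEuclideanCLM (𝕜 := ℝ) A - Matrix.toEuclideanCLM (𝕜 := ℝ) B‖ := by
  obtain ⟨hαm, σ, hσ⟩ := hα
  obtain ⟨hβm, τ, hτ⟩ := hβ
  set TA := Matrix.toEuclideanCLM (𝕜 := ℝ) A with hTAdef
  set TB := Matrix.toEuclideanCLM (𝕜 := ℝ) B with hTBdef
  set bA := hA.eigenvectorBasis with hbA
  set bB := hB.eigenvectorBasis with hbB
  set U := Submodule.span ℝ (⇑bA '' (σ '' Set.Iic i)) with hUdef
  set W := Submodule.span ℝ (⇑bB '' (τ '' Set.Ici i)) with hWdef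
  have hU : Module.finrank ℝ U = (i : ℕ) + 1 := by
    rw [hUdef, finrank_span_eigen, Fintype.card_Iic, Fin.card_Iic]
  have hW : Module.finrank ℝ W = n - (i : ℕ) := by
    rw [hWdef, finrank_span_eigen, Fintype.card_Ici, Fin.card_Ici]
  have hsup : Module.finrank ℝ ↥(U ⊔ W) ≤ n := by
    have h1 := Submodule.finrank_le (U ⊔ W)
    simpa [finrank_euclideanSpace] using h1
  have hinf : 0 < Module.finrank ℝ ↥(U ⊓ W) := by
    have h := Submodule.finrank_sup_add_finrank_inf_eq U W
    rw [hU, hW] at h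
    have hin : (i : ℕ) < n := i.isLt
    omega
  obtain ⟨x, hxne⟩ := Module.finrank_pos_iff_exists_ne_zero.mp hinf
  have hxU : (x : EuclideanSpace ℝ (Fin n)) ∈ U := x.2.1
  have hxW : (x : EuclideanSpace ℝ (Fin n)) ∈ W := x.2.2
  have hx0 : (x : EuclideanSpace ℝ (Fin n)) ≠ 0 := fun h => hxne (Subtype.ext h)
  set y : EuclideanSpace ℝ (Fin n) := (x : EuclideanSpace ℝ (Fin n))
  have h1 : α i * ‖y‖ ^ 2 ≤ ⟪y, TA y⟫ := by
    refine quad_lower (fun k => clm_apply_eigenvectorBasis hA k) ?_ hxU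
    rintro k ⟨j, hj, rfl⟩
    simpa [hσ, Function.comp] using hαm (Set.mem_Iic.mp hj)
  have h2 : ⟪y, TB y⟫ ≤ β i * ‖y‖ ^ 2 := by
    refine quad_upper (fun k => clm_apply_eigenvectorBasis hB k) ?_ hxW
    rintro k ⟨j, hj, rfl⟩
    simpa [hτ, Function.comp] using hβm (Set.mem_Ici.mp hj)
  have h3 : ⟪y, (TA - TB) y⟫ ≤ ‖TA - TB‖ * ‖y‖ ^ 2 := by
    calc ⟪y, (TA - TB) y⟫ ≤ ‖y‖ * ‖(TA - TB) y‖ := real_inner_le_norm _ _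
      _ ≤ ‖y‖ * (‖TA - TB‖ * ‖y‖) := by
          gcongr
          exact (TA - TB).le_opNorm y
      _ = ‖TA - TB‖ * ‖y‖ ^ 2 := by ring
  have hsub : ⟪y, (TA - TB) y⟫ = ⟪y, TA y⟫ - ⟪y, TB y⟫ := by
    rw [ContinuousLinearMap.sub_apply, inner_sub_right]
  have hyn : ‖y‖ ≠ 0 := norm_ne_zero_iff.mpr hx0
  have hy2 : 0 < ‖y‖ ^ 2 := by positivity
  have key : (α i - β i) * ‖y‖ ^ 2 ≤ ‖TA - TB‖ * ‖y‖ ^ 2 := by nlinarith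
  exact le_of_mul_le_mul_right key hy2

end WeylAux

theorem weyl_perturbation {n : ℕ} (A B : Matrix (Fin n) (Fin n) ℝ)
    (hA : A.IsHermitian) (hB : B.IsHermitian)
    (α β : Fin n → ℝ) (hα : IsEigList hA α) (hβ : IsEigList hB β) :
    ∀ i, |α i - β i| ≤ opNorm (A - B) := by 
  intro i
  have hn : opNorm (A - B)
      = ‖Matrix.toEuclideanCLM (𝕜 := ℝ) A - Matrix.toEuclideanCLM (𝕜 := ℝ) B‖ := by
    rw [opNorm, map_sub]
  rw [abs_sub_le_iff, hn]
  refine ⟨weyl_one_side hA hB hα hβ i, ?_⟩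
  rw [norm_sub_rev]
  exact weyl_one_side hB hA hβ hα i
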